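/- Let R be a reduced root system with base Π, and let S ⊆ Π. If K and K' are distinct elements of the cascade 𝒦(S), then ε_K and ε_{K'} are strongly orthogonal, i.e. neither ε_K + ε_{K'} nor ε_K − ε_{K'} is a root of R. -/

import Mathlib

open Finset Module

open scoped Classical

/-- A reduced crystallographic root system in the `k`-vector space `V`, recorded through
the finite set `roots` of roots, the coroot linear forms `corootForm α = ⟨·, α^∨⟩`, and
the integer Cartan pairing `pairInt β α = ⟨β, α^∨⟩ ∈ ℤ` (meaningful when `α, β` are roots). -/
structure RootSystemData (k V : Type*) [Field k] [CharZero k]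
    [AddCommGroup V] [Module k V] where
  /-- the (finite) set of roots -/
  roots : Finset V
  /-- `corootForm α` is the linear form `⟨·, α^∨⟩` associated to the coroot of a root `α` -/
  corootForm : V → V →ₗ[k] k
  /-- the integer `⟨β, α^∨⟩`, recorded as `pairInt β α` -/
  pairInt : V → V → ℤ
  ne_zero : ∀ α ∈ roots, α ≠ (0 : V)
  span_eq_top : Submodule.span k (roots : Set V) = ⊤
  pair_compat : ∀ α ∈ roots, ∀ β ∈ roots, ((pairInt β α : ℤ) : k) = corootForm α β
  pair_self : ∀ α ∈ roots, pairInt α α = 2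
  reflect_mem : ∀ α ∈ roots, ∀ β ∈ roots, β - pairInt β α • α ∈ roots
  reduced : ∀ α ∈ roots, ∀ c : k, c • α ∈ roots → c = 1 ∨ c = -1

namespace RootSystemData

variable {k V : Type*} [Field k] [CharZero k] [AddCommGroup V] [Module k V]
variable (P : RootSystemData k V)

/-- A base (set of simple roots) of the root system: a linearly independent set of roots
such that every root is a nonnegative or nonpositive integral combination of its elements. -/
structure IsBase (B : Finset V) : Prop where
  subset : B ⊆ P.roots
  indep : LinearIndependent k (fun b : B => (b : V))
  pos_or_neg : ∀ α ∈ P.roots,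
    α ∈ AddSubmonoid.closure (B : Set V) ∨ -α ∈ AddSubmonoid.closure (B : Set V)

/-- The positive roots `R₊` with respect to a base `B`. -/
noncomputable def posRoots (B : Finset V) : Finset V :=
  P.roots.filter fun α => α ∈ AddSubmonoid.closure (B : Set V)

/-- `R^S = R ∩ ℤS`. -/
noncomputable def rootsOf (S : Finset V) : Finset V :=
  P.roots.filter fun α => α ∈ AddSubgroup.closure (S : Set V)

/-- `R₊^S = R ∩ ℕS`. -/
noncomputable def posRootsOf (S : Finset V) : Finset V :=
  P.roots.filter fun α => α ∈ AddSubmonoid.closure (S : Set V)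

/-- Two simple roots are linked in the Dynkin diagram of `S ⊆ Δ` when they can be joined
by a chain in `S` of consecutively non-orthogonal elements. -/
def Linked (S : Finset V) : V → V → Prop :=
  Relation.ReflTransGen fun a b => a ∈ S ∧ b ∈ S ∧ P.pairInt a b ≠ 0

/-- A subset of a base is connected if its Dynkin diagram is connected (and nonempty). -/
def IsConnected (S : Finset V) : Prop :=
  S.Nonempty ∧ ∀ a ∈ S, ∀ b ∈ S, P.Linked S a b

/-- `ε` is the highest root of `R^S`: a positive root of `R^S` such that `ε - α ∈ ℕS`
for every root `α ∈ R^S`. -/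
def IsHighestRoot (S : Finset V) (ε : V) : Prop :=
  ε ∈ P.posRootsOf S ∧ ∀ α ∈ P.rootsOf S, ε - α ∈ AddSubmonoid.closure (S : Set V)

/-- The highest root `ε_S` of `R^S` (junk value `0` if it does not exist). -/
noncomputable def highestRoot (S : Finset V) : V :=
  if h : ∃ ε, P.IsHighestRoot S ε then h.choose else 0

/-- The connected component of `a` in the Dynkin diagram of `S`. -/
noncomputable def component (S : Finset V) (a : V) : Finset V :=
  S.filter fun b => P.Linked S a b

/-- The connected components of the Dynkin diagram of `S`. -/
noncomputable def components (S : Finset V) : Finset (Finset V) :=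
  S.image fun a => P.component S a

/-- `{α ∈ S : ⟨α, ε_S^∨⟩ = 0}`. -/
noncomputable def zeroPart (S : Finset V) : Finset V :=
  S.filter fun a => P.pairInt a (P.highestRoot S) = 0

/-- Fuel-based auxiliary recursion for the cascade `𝒦(S)`; for an actual root system the
recursion terminates in at most `card S` steps, so fuel `card S + 1` computes `𝒦(S)`. -/
noncomputable def cascadeAux : ℕ → Finset V → Finset (Finset V)
  | 0, _ => ∅
  | n + 1, S => (P.components S).biUnion fun C => insert C (cascadeAux n (P.zeroPart C))

/-- The cascade `𝒦(S)`, defined recursively by `𝒦(∅) = ∅`,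
`𝒦(S) = 𝒦(S₁) ∪ ⋯ ∪ 𝒦(S_r)` if `S` has connected components `S₁, …, S_r`, and
`𝒦(S) = {S} ∪ 𝒦({α ∈ S : ⟨α, ε_S^∨⟩ = 0})` if `S` is connected. -/
noncomputable def cascade (S : Finset V) : Finset (Finset V) :=
  P.cascadeAux (S.card + 1) S

/-- `Γ^K = {α ∈ R^K : ⟨α, ε_K^∨⟩ > 0}`. -/
noncomputable def gamma (K : Finset V) : Finset V :=
  (P.rootsOf K).filter fun α => 0 < P.pairInt α (P.highestRoot K)

end RootSystemData

section AuxSeq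


variable {k V : Type*} [Field k] [CharZero k] [AddCommGroup V] [Module k V]

/-- Auxiliary integer sequence: orbit of `(1,0)` under `s_β ∘ s_α` in coordinates. -/
private def rsSeq (c d : ℤ) : ℕ → ℤ × ℤ
  | 0 => (1, 0)
  | n+1 =>
    let p := rsSeq c d n
    let x' := -p.1 - c * p.2
    (x', -p.2 - d * x')

private lemma rsSeq_snd_rec (c d : ℤ) (n : ℕ) :
    (rsSeq c d (n+2)).2 = (c*d - 2) * (rsSeq c d (n+1)).2 - (rsSeq c d n).2 := by
  show -(rsSeq c d (n+1)).2 - d * (-(rsSeq c d (n+1)).1 - c * (rsSeq c d (n+1)).2) = _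
  have : (rsSeq c d (n+1)).2 = -(rsSeq c d n).2 - d * (rsSeq c d (n+1)).1 := rfl
  rw [this]; ring

private lemma rsSeq_growth (c d : ℤ) (hd : d ≠ 0) (hs : 2 ≤ |c * d - 2|) :
    ∀ n, |(rsSeq c d n).2| + 1 ≤ |(rsSeq c d (n+1)).2| := by
  intro n
  induction n with
  | zero =>
    have h1 : (rsSeq c d 1).2 = d := by show -(0:ℤ) - d * (-1 - c * 0) = d; ring
    have h0 : (rsSeq c d 0).2 = 0 := rfl
    rw [h0, h1]
    simpa using Int.one_le_abs hd
  | succ n ih =>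
    rw [rsSeq_snd_rec]
    have h1 : |(c*d-2) * (rsSeq c d (n+1)).2| - |(rsSeq c d n).2| ≤
        |(c*d-2) * (rsSeq c d (n+1)).2 - (rsSeq c d n).2| := by
      exact abs_sub_abs_le_abs_sub _ _
    have h2 : 2 * |(rsSeq c d (n+1)).2| ≤ |(c*d-2) * (rsSeq c d (n+1)).2| := by
      rw [abs_mul]
      exact mul_le_mul_of_nonneg_right hs (abs_nonneg _)
    omega


end AuxSeq

namespace RootSystemData

variable {k V : Type*} [Field k] [CharZero k] [AddCommGroup V] [Module k V]
variable {P : RootSystemData k V} {α β : V}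

section Rank2

lemma neg_mem (h : α ∈ P.roots) : -α ∈ P.roots := by
  have h2 := P.reflect_mem α h α h
  rw [P.pair_self α h] at h2
  convert h2 using 1
  abel

lemma pairInt_cast (hα : α ∈ P.roots) (hβ : β ∈ P.roots) :
    ((P.pairInt β α : ℤ) : k) = P.corootForm α β := P.pair_compat α hα β hβ

lemma pairInt_neg_left (hα : α ∈ P.roots) (hβ : β ∈ P.roots) :
    P.pairInt (-β) α = - P.pairInt β α := by
  have : ((P.pairInt (-β) α : ℤ) : k) = ((- P.pairInt β α : ℤ) : k) := by
    rw [pairInt_cast hα (neg_mem hβ), map_neg]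
    push_cast
    rw [pairInt_cast hα hβ]
  exact_mod_cast this

lemma pairInt_neg_self (hα : α ∈ P.roots) : P.pairInt (-α) α = -2 := by
  rw [pairInt_neg_left hα hα, P.pair_self α hα]

lemma pairInt_self_neg (hα : α ∈ P.roots) : P.pairInt α (-α) = -2 := by
  have : ((P.pairInt α (-α) : ℤ) : k) = ((-2 : ℤ) : k) := by
    rw [pairInt_cast (neg_mem hα) hα]
    have : P.corootForm (-α) (-α) = ((2:ℤ):k) := by
      rw [← pairInt_cast (neg_mem hα) (neg_mem hα), P.pair_self (-α) (neg_mem hα)]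
    have h2 : P.corootForm (-α) α = - P.corootForm (-α) (-α) := by
      rw [← map_neg, neg_neg]
    rw [h2, this]; push_cast; ring
  exact_mod_cast this

private lemma rsSeq_root (hα : α ∈ P.roots) (hβ : β ∈ P.roots)
    (c d : ℤ) (hc : c = P.pairInt β α) (hd : d = P.pairInt α β) :
    ∀ n, ((rsSeq c d n).1 : k) • α + ((rsSeq c d n).2 : k) • β ∈ P.roots := by
  have hcc : P.corootForm α α = (2 : k) := by
    rw [← pairInt_cast hα hα, P.pair_self α hα]; norm_num
  have hdd : P.corootForm β β = (2 : k) := by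
    rw [← pairInt_cast hβ hβ, P.pair_self β hβ]; norm_num
  intro n
  induction n with
  | zero => simpa [rsSeq] using hα
  | succ n ih =>
    set x := (rsSeq c d n).1 with hx
    set y := (rsSeq c d n).2 with hy
    set w : V := (x : k) • α + (y : k) • β with hw
    -- first reflection in α
    have hpw : P.pairInt w α = 2 * x + c * y := by
      have : ((P.pairInt w α : ℤ) : k) = ((2 * x + c * y : ℤ) : k) := by
        rw [pairInt_cast hα ih, hw, map_add, map_smul, map_smul, hcc, smul_eq_mul,
          smul_eq_mul, ← pairInt_cast hα hβ, ← hc]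
        push_cast; ring
      exact_mod_cast this
    have hw1 : w - P.pairInt w α • α ∈ P.roots := P.reflect_mem α hα w ih
    rw [hpw] at hw1
    have he1 : w - (2 * x + c * y) • α = ((-x - c*y : ℤ) : k) • α + (y : k) • β := by
      rw [hw, ← Int.cast_smul_eq_zsmul k]
      push_cast
      module
    rw [he1] at hw1
    set x' : ℤ := -x - c*y with hx'
    set w' : V := ((x' : ℤ) : k) • α + (y : k) • β with hw'
    have hpw' : P.pairInt w' β = d * x' + 2 * y := by
      have : ((P.pairInt w' β : ℤ) : k) = ((d * x' + 2 * y : ℤ) : k) := by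
        rw [pairInt_cast hβ hw1, hw', map_add, map_smul, map_smul, hdd, smul_eq_mul,
          smul_eq_mul, ← pairInt_cast hβ hα, ← hd]
        push_cast; ring
      exact_mod_cast this
    have hw2 : w' - P.pairInt w' β • β ∈ P.roots := P.reflect_mem β hβ w' hw1
    rw [hpw'] at hw2
    have he2 : w' - (d * x' + 2 * y) • β
        = ((rsSeq c d (n+1)).1 : k) • α + ((rsSeq c d (n+1)).2 : k) • β := by
      have h1 : (rsSeq c d (n+1)).1 = x' := rfl
      have h2 : (rsSeq c d (n+1)).2 = -y - d * x' := rfl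
      rw [h1, h2, hw', ← Int.cast_smul_eq_zsmul k]
      push_cast
      module
    rw [he2] at hw2
    exact hw2

lemma rank2_aux (hα : α ∈ P.roots) (hβ : β ∈ P.roots)
    (hind : ∀ t : k, β ≠ t • α)
    (hd : P.pairInt α β ≠ 0)
    (hs : 2 ≤ |P.pairInt β α * P.pairInt α β - 2|) : False := by
  set c := P.pairInt β α
  set d := P.pairInt α β
  set f : ℕ → V := fun n => ((rsSeq c d n).1 : k) • α + ((rsSeq c d n).2 : k) • β with hf
  have hroot : ∀ n, f n ∈ P.roots := rsSeq_root hα hβ c d rfl rfl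
  have hmono : StrictMono fun n => |(rsSeq c d n).2| := by
    apply strictMono_nat_of_lt_succ
    intro n
    have := rsSeq_growth c d hd hs n
    omega
  have hinj : Function.Injective f := by
    intro n m hnm
    have hy : ((rsSeq c d n).2 : k) = ((rsSeq c d m).2 : k) := by
      by_contra hyne
      set a := ((rsSeq c d m).1 : k) - ((rsSeq c d n).1 : k) with ha
      set e := ((rsSeq c d n).2 : k) - ((rsSeq c d m).2 : k) with he'
      have he : e ≠ 0 := sub_ne_zero.mpr hyne
      have h0 : e • β = a • α := by
        simp only [hf] at hnm
        rw [ha, he']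
        linear_combination (norm := module) hnm
      have hb : β = (e⁻¹ * a) • α := by
        rw [mul_smul, ← h0, inv_smul_smul₀ he]
      exact hind _ hb
    have hyz : (rsSeq c d n).2 = (rsSeq c d m).2 := by exact_mod_cast hy
    exact hmono.injective (by rw [hyz])
  have : (P.roots : Set V).Infinite :=
    Set.infinite_of_injective_forall_mem hinj (fun n => hroot n)
  exact this (P.roots.finite_toSet)

end Rank2

end RootSystemData

namespace RootSystemData

variable {k V : Type*} [Field k] [CharZero k] [AddCommGroup V] [Module k V]
variable {P : RootSystemData k V} {α β : V}

lemma indep_of_ne (hα : α ∈ P.roots) (hβ : β ∈ P.roots) (h1 : β ≠ α) (h2 : β ≠ -α) :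
    ∀ t : k, β ≠ t • α := by
  intro t ht
  have : t • α ∈ P.roots := ht ▸ hβ
  rcases P.reduced α hα t this with h | h
  · exact h1 (by rw [ht, h, one_smul])
  · exact h2 (by rw [ht, h, neg_smul, one_smul])

lemma pairInt_zero_symm (hα : α ∈ P.roots) (hβ : β ∈ P.roots)
    (h : P.pairInt α β = 0) : P.pairInt β α = 0 := by
  by_contra hc
  have h1 : α ≠ β := by
    intro he; rw [he, P.pair_self β hβ] at h; norm_num at h
  have h2 : α ≠ -β := by
    intro he; rw [he, pairInt_neg_left hβ hβ, P.pair_self β hβ] at h; norm_num at h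
  exact rank2_aux hβ hα (indep_of_ne hβ hα h1 h2) hc (by rw [h]; norm_num)

lemma pairInt_nonneg_symm (hα : α ∈ P.roots) (hβ : β ∈ P.roots)
    (h : 0 ≤ P.pairInt α β) : 0 ≤ P.pairInt β α := by
  by_contra hc
  push_neg at hc
  have hd : P.pairInt α β ≠ 0 := by
    intro h0; rw [pairInt_zero_symm hα hβ h0] at hc; norm_num at hc
  have hd' : 0 < P.pairInt α β := lt_of_le_of_ne h (Ne.symm hd)
  have h1 : β ≠ α := by
    intro he; rw [he, P.pair_self α hα] at hc; norm_num at hc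
  have h2 : β ≠ -α := by
    intro he
    rw [he, pairInt_self_neg hα] at hd'
    norm_num at hd'
  have hprod : P.pairInt β α * P.pairInt α β ≤ -1 := by
    nlinarith [mul_pos (by linarith : (0:ℤ) < -P.pairInt β α) hd']
  refine rank2_aux hα hβ (indep_of_ne hα hβ h1 h2) hd ?_
  rcases abs_cases (P.pairInt β α * P.pairInt α β - 2) with ⟨h', _⟩ | ⟨h', _⟩ <;> omega

lemma sum_root (hα : α ∈ P.roots) (hβ : β ∈ P.roots)
    (hneg : P.pairInt β α < 0) (hne : β ≠ -α) : α + β ∈ P.roots := by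
  have h1 : β ≠ α := by
    intro he; rw [he, P.pair_self α hα] at hneg; norm_num at hneg
  have hind := indep_of_ne hα hβ h1 hne
  have hd : P.pairInt α β < 0 := by
    rcases lt_trichotomy (P.pairInt α β) 0 with h | h | h
    · exact h
    · exfalso; rw [pairInt_zero_symm hα hβ h] at hneg; norm_num at hneg
    · exact absurd (pairInt_nonneg_symm hα hβ (le_of_lt h)) (by omega)
  have hor : P.pairInt β α = -1 ∨ P.pairInt α β = -1 := by
    by_contra hcon
    push_neg at hcon
    have hc2 : P.pairInt β α ≤ -2 := by
      have := hcon.1; omega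
    have hd2 : P.pairInt α β ≤ -2 := by
      have := hcon.2; omega
    have hprod : 4 ≤ P.pairInt β α * P.pairInt α β := by
      nlinarith [mul_nonneg (by linarith : (0:ℤ) ≤ -P.pairInt β α - 2)
        (by linarith : (0:ℤ) ≤ -P.pairInt α β - 2)]
    refine rank2_aux hα hβ hind (by omega) ?_
    rcases abs_cases (P.pairInt β α * P.pairInt α β - 2) with ⟨h', _⟩ | ⟨h', _⟩ <;> omega
  rcases hor with h | h
  · have := P.reflect_mem α hα β hβ
    rw [h, neg_one_zsmul, sub_neg_eq_add, add_comm] at this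
    exact this
  · have := P.reflect_mem β hβ α hα
    rw [h, neg_one_zsmul, sub_neg_eq_add] at this
    exact this

lemma diff_root (hα : α ∈ P.roots) (hβ : β ∈ P.roots)
    (hpos : 0 < P.pairInt β α) (hne : β ≠ α) : β - α ∈ P.roots := by
  have hnb : -β ∈ P.roots := neg_mem hβ
  have h1 : P.pairInt (-β) α < 0 := by
    rw [pairInt_neg_left hα hβ]; omega
  have h2 : (-β : V) ≠ -α := fun h => hne (neg_injective h)
  have h3 : -(α + -β) = β - α := by abel
  rw [← h3]
  exact neg_mem (sum_root hα hnb h1 h2)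

end RootSystemData

section Closure

variable {k V : Type*} [Field k] [CharZero k] [AddCommGroup V] [Module k V]

lemma mem_closureN_iff {S : Finset V} {v : V} :
    v ∈ AddSubmonoid.closure (S : Set V) ↔ ∃ c : V → ℕ, v = ∑ a ∈ S, c a • a := by
  constructor
  · intro hv
    induction hv using AddSubmonoid.closure_induction with
    | mem x hx =>
      refine ⟨fun b => if b = x then 1 else 0, ?_⟩
      have hcongr : ∀ a ∈ S, (if a = x then (1:ℕ) else 0) • a = if a = x then a else 0 := by
        intro a _; split <;> simp
      rw [Finset.sum_congr rfl hcongr, Finset.sum_ite_eq' S x (fun a => a)]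
      simp [Finset.mem_coe.mp hx]
    | zero => exact ⟨0, by simp⟩
    | add x y _ _ hx hy =>
      obtain ⟨c1, h1⟩ := hx
      obtain ⟨c2, h2⟩ := hy
      exact ⟨c1 + c2, by rw [h1, h2, ← Finset.sum_add_distrib]
                         exact Finset.sum_congr rfl fun a _ => (add_smul _ _ _).symm⟩
  · rintro ⟨c, rfl⟩
    refine AddSubmonoid.sum_mem _ fun a ha => ?_
    exact nsmul_mem (AddSubmonoid.subset_closure (Finset.mem_coe.mpr ha)) _

lemma mem_closureZ_iff {S : Finset V} {v : V} :
    v ∈ AddSubgroup.closure (S : Set V) ↔ ∃ c : V → ℤ, v = ∑ a ∈ S, c a • a := by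
  constructor
  · intro hv
    induction hv using AddSubgroup.closure_induction with
    | mem x hx =>
      refine ⟨fun b => if b = x then 1 else 0, ?_⟩
      have hcongr : ∀ a ∈ S, (if a = x then (1:ℤ) else 0) • a = if a = x then a else 0 := by
        intro a _; split <;> simp
      rw [Finset.sum_congr rfl hcongr, Finset.sum_ite_eq' S x (fun a => a)]
      simp [Finset.mem_coe.mp hx]
    | zero => exact ⟨0, by simp⟩
    | add x y _ _ hx hy =>
      obtain ⟨c1, h1⟩ := hx
      obtain ⟨c2, h2⟩ := hy
      exact ⟨c1 + c2, by rw [h1, h2, ← Finset.sum_add_distrib]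
                         exact Finset.sum_congr rfl fun a _ => (add_smul _ _ _).symm⟩
    | neg x _ hx =>
      obtain ⟨c, hc⟩ := hx
      refine ⟨-c, ?_⟩
      rw [hc, ← Finset.sum_neg_distrib]
      exact Finset.sum_congr rfl fun a _ => by simp
  · rintro ⟨c, rfl⟩
    refine AddSubgroup.sum_mem _ fun a ha => ?_
    exact zsmul_mem (AddSubgroup.subset_closure (Finset.mem_coe.mpr ha)) _

lemma repr_of_memN {S Δ : Finset V} (hS : S ⊆ Δ) {v : V}
    (hv : v ∈ AddSubmonoid.closure (S : Set V)) :
    ∃ c : V → ℕ, (∀ a, a ∉ S → c a = 0) ∧ v = ∑ a ∈ Δ, c a • a := by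
  obtain ⟨c, hc⟩ := mem_closureN_iff.mp hv
  refine ⟨fun a => if a ∈ S then c a else 0, fun a ha => by simp [ha], ?_⟩
  rw [hc, ← Finset.sum_subset hS (fun a _ ha => by simp [ha])]
  exact Finset.sum_congr rfl fun a ha => by simp [ha]

lemma repr_of_memZ {S Δ : Finset V} (hS : S ⊆ Δ) {v : V}
    (hv : v ∈ AddSubgroup.closure (S : Set V)) :
    ∃ c : V → ℤ, (∀ a, a ∉ S → c a = 0) ∧ v = ∑ a ∈ Δ, c a • a := by
  obtain ⟨c, hc⟩ := mem_closureZ_iff.mp hv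
  refine ⟨fun a => if a ∈ S then c a else 0, fun a ha => by simp [ha], ?_⟩
  rw [hc, ← Finset.sum_subset hS (fun a _ ha => by simp [ha])]
  exact Finset.sum_congr rfl fun a ha => by simp [ha]

end Closure

namespace RootSystemData

variable {k V : Type*} [Field k] [CharZero k] [AddCommGroup V] [Module k V]
variable {P : RootSystemData k V} {Δ : Finset V}

lemma coeff_unique (hb : P.IsBase Δ) {c c' : V → ℤ}
    (h : ∑ a ∈ Δ, c a • a = ∑ a ∈ Δ, c' a • a) : ∀ a ∈ Δ, c a = c' a := by
  have key : ∑ b ∈ Δ.attach, ((c b - c' b : ℤ) : k) • (b : V) = 0 := by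
    rw [Finset.sum_attach Δ (fun a => ((c a - c' a : ℤ) : k) • a)]
    have : ∀ a ∈ Δ, ((c a - c' a : ℤ) : k) • a = c a • a - c' a • a := by
      intro a _
      rw [Int.cast_smul_eq_zsmul, sub_zsmul, sub_eq_add_neg]
    rw [Finset.sum_congr rfl this, Finset.sum_sub_distrib, h, sub_self]
  have := linearIndependent_iff'.mp hb.indep Finset.univ
    (fun b => ((c b - c' b : ℤ) : k)) (by rwa [Finset.univ_eq_attach])
  intro a ha
  have h0 := this ⟨a, ha⟩ (Finset.mem_univ _)
  have : ((c a - c' a : ℤ) : k) = 0 := h0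
  have : (c a - c' a : ℤ) = 0 := by exact_mod_cast this
  omega

lemma coeff_eq_zero (hb : P.IsBase Δ) {c : V → ℤ}
    (h : ∑ a ∈ Δ, c a • a = 0) : ∀ a ∈ Δ, c a = 0 := by
  have := coeff_unique hb (c' := fun _ => 0) (by rw [h]; simp)
  simpa using this

/-- A root lying in `ℤC` for `C ⊆ Δ` is a nonnegative or nonpositive combination of `C`. -/
lemma root_sign_split (hb : P.IsBase Δ) {C : Finset V} (hC : C ⊆ Δ) {ρ : V}
    (hρ : ρ ∈ P.roots) (hz : ρ ∈ AddSubgroup.closure (C : Set V)) :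
    ρ ∈ AddSubmonoid.closure (C : Set V) ∨ -ρ ∈ AddSubmonoid.closure (C : Set V) := by
  obtain ⟨c, hsupp, hrep⟩ := repr_of_memZ hC hz
  rcases hb.pos_or_neg ρ hρ with hpos | hneg
  · left
    obtain ⟨m, hm⟩ := mem_closureN_iff.mp hpos
    have hmz : ρ = ∑ a ∈ Δ, ((m a : ℤ)) • a := by
      rw [hm]; exact Finset.sum_congr rfl fun a _ => (natCast_zsmul _ _).symm
    have huniq := coeff_unique hb (hrep.symm.trans hmz)
    rw [mem_closureN_iff]
    refine ⟨fun a => (c a).toNat, ?_⟩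
    have h1 : ρ = ∑ a ∈ C, c a • a := by
      rw [hrep, Finset.sum_subset hC (fun a _ ha => by rw [hsupp a ha, zero_zsmul])]
    rw [h1]
    refine Finset.sum_congr rfl fun a ha => ?_
    have : 0 ≤ c a := by rw [huniq a (hC ha)]; positivity
    rw [← natCast_zsmul, Int.toNat_of_nonneg this]
  · right
    obtain ⟨m, hm⟩ := mem_closureN_iff.mp hneg
    have hmz : -ρ = ∑ a ∈ Δ, ((m a : ℤ)) • a := by
      rw [hm]; exact Finset.sum_congr rfl fun a _ => (natCast_zsmul _ _).symm
    have hrep' : -ρ = ∑ a ∈ Δ, (-(c a)) • a := by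
      rw [hrep, ← Finset.sum_neg_distrib]
      exact Finset.sum_congr rfl fun a _ => (neg_zsmul _ _).symm
    have huniq := coeff_unique hb (hrep'.symm.trans hmz)
    rw [mem_closureN_iff]
    refine ⟨fun a => (-(c a)).toNat, ?_⟩
    have h1 : -ρ = ∑ a ∈ C, (-(c a)) • a := by
      rw [hrep', Finset.sum_subset hC (fun a _ ha => by rw [hsupp a ha]; simp)]
    rw [h1]
    refine Finset.sum_congr rfl fun a ha => ?_
    have : 0 ≤ -c a := by rw [huniq a (hC ha)]; positivity
    rw [← natCast_zsmul, Int.toNat_of_nonneg this]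

/-- Integer pairing of a root written in coordinates over `Δ`. -/
lemma pairInt_rep (hb : P.IsBase Δ) {γ β : V} (hγ : γ ∈ P.roots) (hβ : β ∈ P.roots)
    {c : V → ℤ} (hrep : γ = ∑ a ∈ Δ, c a • a) :
    P.pairInt γ β = ∑ a ∈ Δ, c a * P.pairInt a β := by
  have key : ((P.pairInt γ β : ℤ) : k) = ((∑ a ∈ Δ, c a * P.pairInt a β : ℤ) : k) := by
    rw [pairInt_cast hβ hγ, hrep, map_sum]
    push_cast
    refine Finset.sum_congr rfl fun a ha => ?_
    rw [map_zsmul, zsmul_eq_mul, ← pairInt_cast hβ (hb.subset ha)]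
  exact_mod_cast key

end RootSystemData

section Crossing

variable {V : Type*}

lemma crossing_lemma {r : V → V → Prop} {A : Set V} {u v : V}
    (h : Relation.ReflTransGen r u v) (hu : u ∈ A) (hv : v ∉ A) :
    ∃ p q, r p q ∧ p ∈ A ∧ q ∉ A := by
  induction h with
  | refl => exact absurd hu hv
  | @tail b c hab hbc ih =>
    by_cases hbA : b ∈ A
    · exact ⟨b, c, hbc, hbA, hv⟩
    · exact ih hbA

end Crossing

namespace RootSystemData

variable {k V : Type*} [Field k] [CharZero k] [AddCommGroup V] [Module k V]
variable {P : RootSystemData k V} {Δ : Finset V}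

lemma rel_symm {T : Finset V} (hT : T ⊆ P.roots) {a b : V}
    (h : a ∈ T ∧ b ∈ T ∧ P.pairInt a b ≠ 0) : b ∈ T ∧ a ∈ T ∧ P.pairInt b a ≠ 0 := by
  obtain ⟨ha, hbT, hab⟩ := h
  exact ⟨hbT, ha, fun h0 => hab (pairInt_zero_symm (hT hbT) (hT ha) h0)⟩

lemma linked_symm {T : Finset V} (hT : T ⊆ P.roots) {a b : V}
    (h : P.Linked T a b) : P.Linked T b a := by
  induction h with
  | refl => exact Relation.ReflTransGen.refl
  | @tail b c _ hbc ih =>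
    exact Relation.ReflTransGen.head (rel_symm hT hbc) ih

lemma mem_component_iff {T : Finset V} {a b : V} :
    b ∈ P.component T a ↔ b ∈ T ∧ P.Linked T a b := Finset.mem_filter

lemma mem_component_self {T : Finset V} {a : V} (ha : a ∈ T) : a ∈ P.component T a :=
  mem_component_iff.mpr ⟨ha, Relation.ReflTransGen.refl⟩

lemma component_eq_of_linked {T : Finset V} (hT : T ⊆ P.roots) {a b : V}
    (h : P.Linked T a b) : P.component T a = P.component T b := by
  ext v
  simp only [mem_component_iff]
  exact ⟨fun ⟨hv, hl⟩ => ⟨hv, Relation.ReflTransGen.trans (linked_symm hT h) hl⟩,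
    fun ⟨hv, hl⟩ => ⟨hv, Relation.ReflTransGen.trans h hl⟩⟩

lemma components_subset {T C : Finset V} (hC : C ∈ P.components T) : C ⊆ T := by
  obtain ⟨a, _, rfl⟩ := Finset.mem_image.mp hC
  exact Finset.filter_subset _ _

lemma components_nonempty {T C : Finset V} (hC : C ∈ P.components T) : C.Nonempty := by
  obtain ⟨a, ha, rfl⟩ := Finset.mem_image.mp hC
  exact ⟨a, mem_component_self ha⟩

/-- Distinct components are orthogonal and disjoint. -/
lemma components_orth {T : Finset V} (hT : T ⊆ P.roots) {C C' : Finset V}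
    (hC : C ∈ P.components T) (hC' : C' ∈ P.components T) (hne : C ≠ C') :
    (∀ a ∈ C, ∀ b ∈ C', P.pairInt a b = 0) ∧ ∀ a, ¬(a ∈ C ∧ a ∈ C') := by
  obtain ⟨x, hx, rfl⟩ := Finset.mem_image.mp hC
  obtain ⟨x', hx', rfl⟩ := Finset.mem_image.mp hC'
  constructor
  · intro a ha b hb
    by_contra hab
    obtain ⟨haT, hla⟩ := mem_component_iff.mp ha
    obtain ⟨hbT, hlb⟩ := mem_component_iff.mp hb
    have hlink : P.Linked T x x' :=
      Relation.ReflTransGen.trans (Relation.ReflTransGen.trans hla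
        (Relation.ReflTransGen.single ⟨haT, hbT, hab⟩)) (linked_symm hT hlb)
    exact hne (component_eq_of_linked hT hlink)
  · rintro a ⟨ha, ha'⟩
    obtain ⟨_, hla⟩ := mem_component_iff.mp ha
    obtain ⟨_, hla'⟩ := mem_component_iff.mp ha'
    exact hne (component_eq_of_linked hT
      (Relation.ReflTransGen.trans hla (linked_symm hT hla')))

/-- Distinct simple roots pair nonpositively. -/
lemma pairInt_nonpos_of_base (hb : P.IsBase Δ) {u v : V} (hu : u ∈ Δ) (hv : v ∈ Δ)
    (huv : u ≠ v) : P.pairInt u v ≤ 0 := by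
  by_contra hc
  push_neg at hc
  have hroot : u - v ∈ P.roots := diff_root (hb.subset hv) (hb.subset hu) hc huv
  set c : V → ℤ := fun a => (if a = u then 1 else 0) - (if a = v then 1 else 0) with hcdef
  have hrep : u - v = ∑ a ∈ Δ, c a • a := by
    have h1 : ∀ a ∈ Δ, c a • a =
        (if a = u then a else 0) - (if a = v then a else 0) := by
      intro a _
      rw [hcdef]
      by_cases h1 : a = u
      · by_cases h2 : a = v
        · exact absurd (h1.symm.trans h2) huv
        · subst h1; simp [h2]
      · by_cases h2 : a = v
        · subst h2; simp [h1]
        · simp [h1, h2]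
    rw [Finset.sum_congr rfl h1, Finset.sum_sub_distrib,
      Finset.sum_ite_eq' Δ u (fun a => a), Finset.sum_ite_eq' Δ v (fun a => a),
      if_pos hu, if_pos hv]
  rcases hb.pos_or_neg _ hroot with hpos | hneg
  · obtain ⟨m, hm⟩ := mem_closureN_iff.mp hpos
    have hmz : u - v = ∑ a ∈ Δ, ((m a : ℤ)) • a := by
      rw [hm]; exact Finset.sum_congr rfl fun a _ => (natCast_zsmul _ _).symm
    have := coeff_unique hb (hrep.symm.trans hmz) v hv
    rw [hcdef] at this
    simp [Ne.symm huv] at this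
  · obtain ⟨m, hm⟩ := mem_closureN_iff.mp hneg
    have hmz : -(u - v) = ∑ a ∈ Δ, ((m a : ℤ)) • a := by
      rw [hm]; exact Finset.sum_congr rfl fun a _ => (natCast_zsmul _ _).symm
    have hrep' : -(u - v) = ∑ a ∈ Δ, (-(c a)) • a := by
      rw [hrep, ← Finset.sum_neg_distrib]
      exact Finset.sum_congr rfl fun a _ => (neg_zsmul _ _).symm
    have := coeff_unique hb (hrep'.symm.trans hmz) u hu
    rw [hcdef] at this
    simp [huv] at this

end RootSystemData

namespace RootSystemData

variable {k V : Type*} [Field k] [CharZero k] [AddCommGroup V] [Module k V]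
variable {P : RootSystemData k V} {Δ : Finset V}

lemma clNZ {C : Finset V} {v : V} (h : v ∈ AddSubmonoid.closure (C : Set V)) :
    v ∈ AddSubgroup.closure (C : Set V) := by
  obtain ⟨c, rfl⟩ := mem_closureN_iff.mp h
  refine AddSubgroup.sum_mem _ fun a ha => ?_
  exact nsmul_mem (AddSubgroup.subset_closure (Finset.mem_coe.mpr ha)) _

lemma exists_highestRoot (hb : P.IsBase Δ) {T : Finset V} (hT : T ⊆ Δ) {x : V}
    (hx : x ∈ T) : ∃ ε, P.IsHighestRoot (P.component T x) ε := by
  classical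
  set C := P.component T x with hCdef
  have hCT : C ⊆ T := Finset.filter_subset _ _
  have hCΔ : C ⊆ Δ := fun a ha => hT (hCT ha)
  have hCroots : C ⊆ P.roots := fun a ha => hb.subset (hCΔ ha)
  have hTroots : T ⊆ P.roots := fun a ha => hb.subset (hT ha)
  set cl := AddSubmonoid.closure (C : Set V) with hcl
  have hrepr : ∀ v ∈ cl, ∃ c : V → ℕ, (∀ a, a ∉ C → c a = 0) ∧ v = ∑ a ∈ Δ, c a • a :=
    fun v hv => repr_of_memN hCΔ hv
  have huniqN : ∀ (c c' : V → ℕ), (∑ a ∈ Δ, c a • a = ∑ a ∈ Δ, c' a • a) →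
      ∀ a ∈ Δ, c a = c' a := by
    intro c c' h a ha
    have hz : ∑ a ∈ Δ, ((c a : ℤ)) • a = ∑ a ∈ Δ, ((c' a : ℤ)) • a := by
      calc ∑ a ∈ Δ, ((c a : ℤ)) • a = ∑ a ∈ Δ, c a • a :=
            Finset.sum_congr rfl fun a _ => natCast_zsmul _ _
        _ = ∑ a ∈ Δ, c' a • a := h
        _ = ∑ a ∈ Δ, ((c' a : ℤ)) • a :=
            (Finset.sum_congr rfl fun a _ => natCast_zsmul _ _).symm
    exact_mod_cast coeff_unique hb hz a ha
  set ht : V → ℕ := fun v =>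
    if h : ∃ c : V → ℕ, (∀ a, a ∉ C → c a = 0) ∧ v = ∑ a ∈ Δ, c a • a then
      ∑ a ∈ Δ, h.choose a else 0 with htdef
  have htEq : ∀ (v : V) (c : V → ℕ), (∀ a, a ∉ C → c a = 0) → v = ∑ a ∈ Δ, c a • a →
      ht v = ∑ a ∈ Δ, c a := by
    intro v c hsupp hrep
    have hex : ∃ c : V → ℕ, (∀ a, a ∉ C → c a = 0) ∧ v = ∑ a ∈ Δ, c a • a := ⟨c, hsupp, hrep⟩
    rw [htdef]
    simp only [dif_pos hex]
    exact Finset.sum_congr rfl fun a ha => huniqN _ _ (hex.choose_spec.2.symm.trans hrep) a ha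
  have htAdd : ∀ v ∈ cl, ∀ w ∈ cl, ht (v + w) = ht v + ht w := by
    intro v hv w hw
    obtain ⟨c, hc1, hc2⟩ := hrepr v hv
    obtain ⟨c', hc1', hc2'⟩ := hrepr w hw
    have hvw : v + w = ∑ a ∈ Δ, (c a + c' a) • a := by
      rw [hc2, hc2', ← Finset.sum_add_distrib]
      exact Finset.sum_congr rfl fun a _ => (add_smul _ _ _).symm
    rw [htEq _ _ (fun a ha => by rw [hc1 a ha, hc1' a ha]) hvw,
      htEq _ _ hc1 hc2, htEq _ _ hc1' hc2', Finset.sum_add_distrib]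
  have htPos : ∀ v ∈ cl, v ≠ 0 → 1 ≤ ht v := by
    intro v hv hvne
    obtain ⟨c, hc1, hc2⟩ := hrepr v hv
    rw [htEq _ _ hc1 hc2]
    by_contra hzero
    push_neg at hzero
    have hall : ∀ a ∈ Δ, c a = 0 := fun a ha =>
      Finset.sum_eq_zero_iff.mp (Nat.lt_one_iff.mp hzero) a ha
    exact hvne (hc2.trans (Finset.sum_eq_zero fun a ha => by rw [hall a ha, zero_smul]))
  set Pos := P.posRootsOf C with hPosdef
  have hmemPos : ∀ γ, γ ∈ Pos ↔ γ ∈ P.roots ∧ γ ∈ cl := by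
    intro γ
    simp only [hPosdef, posRootsOf, Finset.mem_filter, hcl]
  have hxC : x ∈ C := mem_component_self hx
  have hxPos : x ∈ Pos := (hmemPos x).mpr ⟨hb.subset (hT hx),
    AddSubmonoid.subset_closure (Finset.mem_coe.mpr hxC)⟩
  obtain ⟨β, hβPos, hβmaxht⟩ := Finset.exists_max_image Pos ht ⟨x, hxPos⟩
  obtain ⟨hβroot, hβcl⟩ := (hmemPos β).mp hβPos
  have hOM : ∀ γ ∈ Pos, ht β ≤ ht γ → ∀ δ ∈ Pos, δ - γ ∈ cl → δ = γ := by
    intro γ hγ hht δ hδ hsub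
    by_contra hne
    obtain ⟨hδroot, hδcl⟩ := (hmemPos δ).mp hδ
    obtain ⟨hγroot, hγcl⟩ := (hmemPos γ).mp hγ
    have h1 : ht δ = ht γ + ht (δ - γ) := by
      have he : γ + (δ - γ) = δ := by abel
      conv_lhs => rw [← he]
      rw [htAdd _ hγcl _ hsub]
    have h2 : 1 ≤ ht (δ - γ) := htPos _ hsub (sub_ne_zero.mpr hne)
    have h3 := hβmaxht δ hδ
    omega
  have step1 : ∀ γ ∈ Pos, (∀ δ ∈ Pos, δ - γ ∈ cl → δ = γ) → ∀ a ∈ C, 0 ≤ P.pairInt γ a := by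
    intro γ hγ hmax a haC
    obtain ⟨hγroot, hγcl⟩ := (hmemPos γ).mp hγ
    by_contra hneg
    push_neg at hneg
    have haroot : a ∈ P.roots := hCroots haC
    have hacl : a ∈ cl := AddSubmonoid.subset_closure (Finset.mem_coe.mpr haC)
    have hγa : γ ≠ -a := by
      intro he
      have h0 : γ + a = 0 := by rw [he]; abel
      have hadd := htAdd _ hγcl _ hacl
      rw [h0] at hadd
      have h1 := htPos _ hγcl (P.ne_zero _ hγroot)
      have h2 := htPos _ hacl (P.ne_zero _ haroot)
      have h3 : ht (0 : V) = 0 := by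
        rw [htEq 0 (fun _ => 0) (fun _ _ => rfl) (by simp)]
        simp
      omega
    have hsum : a + γ ∈ P.roots := sum_root haroot hγroot hneg hγa
    have hsumPos : a + γ ∈ Pos := (hmemPos _).mpr ⟨hsum, add_mem hacl hγcl⟩
    have heq := hmax (a + γ) hsumPos (by rw [add_sub_cancel_right]; exact hacl)
    have ha0 : a = 0 := by
      have := heq
      nth_rewrite 2 [← zero_add γ] at this
      exact add_right_cancel this
    exact P.ne_zero a haroot ha0
  have step2 : ∀ γ ∈ Pos, (∀ δ ∈ Pos, δ - γ ∈ cl → δ = γ) →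
      ∀ (c : V → ℕ), (∀ a, a ∉ C → c a = 0) → γ = ∑ a ∈ Δ, c a • a →
      ∀ a ∈ C, 1 ≤ c a := by
    intro γ hγ hmax c hsupp hrep a haC
    obtain ⟨hγroot, hγcl⟩ := (hmemPos γ).mp hγ
    by_contra hca
    push_neg at hca
    have hca0 : c a = 0 := by omega
    set A : Set V := {v | v ∈ C ∧ c v ≠ 0} with hA
    have hAexists : ∃ w, w ∈ A := by
      by_contra hno
      push_neg at hno
      have hall : ∀ v ∈ Δ, c v = 0 := by
        intro v hv
        by_cases hvC : v ∈ C
        · by_contra hcv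
          exact hno v ⟨hvC, hcv⟩
        · exact hsupp v hvC
      exact P.ne_zero γ hγroot (hrep.trans (Finset.sum_eq_zero fun v hv => by
        rw [hall v hv, zero_smul]))
    obtain ⟨w, hwA⟩ := hAexists
    have hwC : w ∈ C := hwA.1
    obtain ⟨hwT, hlw⟩ := mem_component_iff.mp hwC
    obtain ⟨haT, hla⟩ := mem_component_iff.mp haC
    have hlwa : P.Linked T w a := Relation.ReflTransGen.trans (linked_symm hTroots hlw) hla
    have haA : a ∉ A := fun h => h.2 hca0
    obtain ⟨p, q, hpq, hpA, hqA⟩ := crossing_lemma hlwa hwA haA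
    obtain ⟨hpT, hqT, hpqne⟩ := hpq
    have hpC : p ∈ C := hpA.1
    have hqC : q ∈ C := mem_component_iff.mpr ⟨hqT,
      Relation.ReflTransGen.tail (mem_component_iff.mp hpC).2 ⟨hpT, hqT, hpqne⟩⟩
    have hcq : c q = 0 := by
      by_contra h
      exact hqA ⟨hqC, h⟩
    have hqroot : q ∈ P.roots := hCroots hqC
    have hrepZ : γ = ∑ b ∈ Δ, ((c b : ℤ)) • b := by
      rw [hrep]; exact Finset.sum_congr rfl fun b _ => (natCast_zsmul _ _).symm
    have hpair := pairInt_rep hb hγroot hqroot hrepZ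
    have hterm : ∀ b ∈ Δ, (c b : ℤ) * P.pairInt b q ≤ 0 := by
      intro b hbΔ
      by_cases hcb : c b = 0
      · simp [hcb]
      · have hbq : b ≠ q := fun h => hcb (h ▸ hcq)
        exact mul_nonpos_of_nonneg_of_nonpos (by positivity)
          (pairInt_nonpos_of_base hb hbΔ (hCΔ hqC) hbq)
    have hpΔ : p ∈ Δ := hCΔ hpC
    have hppos : 1 ≤ (c p : ℤ) := by
      have := hpA.2
      omega
    have hpqne' : p ≠ q := by
      intro h
      rw [h] at hpA
      exact hqA hpA
    have hpneg : P.pairInt p q ≤ -1 := by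
      have h1 := pairInt_nonpos_of_base hb hpΔ (hCΔ hqC) hpqne'
      omega
    have hsplit := Finset.sum_eq_add_sum_sdiff_singleton_of_mem hpΔ
      (fun b => (c b : ℤ) * P.pairInt b q)
    have hrest : ∑ b ∈ Δ \ {p}, (c b : ℤ) * P.pairInt b q ≤ 0 :=
      Finset.sum_nonpos fun b hbm => hterm b (Finset.mem_sdiff.mp hbm).1
    have htp : (c p : ℤ) * P.pairInt p q ≤ -1 := by nlinarith
    have hlt : P.pairInt γ q < 0 := by
      rw [hpair, hsplit]
      linarith
    exact absurd hlt (not_lt.mpr (step1 γ hγ hmax q hqC))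
  have hβmax : ∀ δ ∈ Pos, δ - β ∈ cl → δ = β := hOM β hβPos le_rfl
  have step1β := step1 β hβPos hβmax
  have step1'β : ∀ a ∈ C, 0 ≤ P.pairInt a β := fun a haC =>
    pairInt_nonneg_symm hβroot (hCroots haC) (step1β a haC)
  obtain ⟨cβ, hcβsupp, hcβrep⟩ := hrepr β hβcl
  have hβrepZ : β = ∑ b ∈ Δ, ((cβ b : ℤ)) • b := by
    rw [hcβrep]; exact Finset.sum_congr rfl fun b _ => (natCast_zsmul _ _).symm
  have step3 : ∃ a ∈ C, 0 < P.pairInt a β := by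
    by_contra hno
    push_neg at hno
    have hpair := pairInt_rep hb hβroot hβroot hβrepZ
    rw [P.pair_self β hβroot] at hpair
    have hsum : ∑ b ∈ Δ, ((cβ b : ℤ)) * P.pairInt b β ≤ 0 := by
      refine Finset.sum_nonpos fun b hbΔ => ?_
      by_cases hcb : cβ b = 0
      · simp [hcb]
      · have hbC : b ∈ C := by
          by_contra h
          exact hcb (hcβsupp b h)
        exact mul_nonpos_of_nonneg_of_nonpos (by positivity) (hno b hbC)
    omega
  obtain ⟨a₀, ha₀C, ha₀pos⟩ := step3
  have uniq : ∀ γ ∈ Pos, (∀ δ ∈ Pos, δ - γ ∈ cl → δ = γ) → γ = β := by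
    intro γ hγ hmax
    by_contra hne
    obtain ⟨hγroot, hγcl⟩ := (hmemPos γ).mp hγ
    obtain ⟨cγ, hcγsupp, hcγrep⟩ := hrepr γ hγcl
    have hcγfull := step2 γ hγ hmax cγ hcγsupp hcγrep
    have hγrepZ : γ = ∑ b ∈ Δ, ((cγ b : ℤ)) • b := by
      rw [hcγrep]; exact Finset.sum_congr rfl fun b _ => (natCast_zsmul _ _).symm
    have hpair := pairInt_rep hb hγroot hβroot hγrepZ
    have hterm : ∀ b ∈ Δ, 0 ≤ (cγ b : ℤ) * P.pairInt b β := by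
      intro b hbΔ
      by_cases hcb : cγ b = 0
      · simp [hcb]
      · have hbC : b ∈ C := by
          by_contra h
          exact hcb (hcγsupp b h)
        exact mul_nonneg (by positivity) (step1'β b hbC)
    have ha₀Δ : a₀ ∈ Δ := hCΔ ha₀C
    have hsplit := Finset.sum_eq_add_sum_sdiff_singleton_of_mem ha₀Δ
      (fun b => (cγ b : ℤ) * P.pairInt b β)
    have hrest : 0 ≤ ∑ b ∈ Δ \ {a₀}, (cγ b : ℤ) * P.pairInt b β :=
      Finset.sum_nonneg fun b hbm => hterm b (Finset.mem_sdiff.mp hbm).1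
    have hta : 1 ≤ (cγ a₀ : ℤ) * P.pairInt a₀ β := by
      have h1 : 1 ≤ (cγ a₀ : ℤ) := by
        have := hcγfull a₀ ha₀C
        omega
      nlinarith
    have hpos : 0 < P.pairInt γ β := by
      rw [hpair, hsplit]
      linarith
    have hdiff : γ - β ∈ P.roots := diff_root hβroot hγroot hpos hne
    have hdiffZ : γ - β ∈ AddSubgroup.closure (C : Set V) :=
      AddSubgroup.sub_mem _ (clNZ hγcl) (clNZ hβcl)
    rcases root_sign_split hb hCΔ hdiff hdiffZ with hp | hn
    · exact hne (hβmax γ hγ hp)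
    · have hbg : β - γ ∈ cl := by
        rw [← neg_sub]
        exact hn
      exact hne (hmax β hβPos hbg).symm
  have main : ∀ n : ℕ, ∀ γ ∈ Pos, ht β ≤ ht γ + n → β - γ ∈ cl := by
    intro n
    induction n with
    | zero =>
      intro γ hγ hht
      have hmax : ∀ δ ∈ Pos, δ - γ ∈ cl → δ = γ := hOM γ hγ (by omega)
      rw [uniq γ hγ hmax, sub_self]
      exact zero_mem _
    | succ n ih =>
      intro γ hγ hht
      by_cases hmax : ∀ δ ∈ Pos, δ - γ ∈ cl → δ = γ
      · rw [uniq γ hγ hmax, sub_self]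
        exact zero_mem _
      · push_neg at hmax
        obtain ⟨δ, hδ, hsub, hne⟩ := hmax
        obtain ⟨hγroot, hγcl⟩ := (hmemPos γ).mp hγ
        have h1 : ht δ = ht γ + ht (δ - γ) := by
          have he : γ + (δ - γ) = δ := by abel
          conv_lhs => rw [← he]
          rw [htAdd _ hγcl _ hsub]
        have h2 : 1 ≤ ht (δ - γ) := htPos _ hsub (sub_ne_zero.mpr hne)
        have h3 : ht β ≤ ht δ + n := by
          have := hβmaxht δ hδ
          omega
        have hind := ih δ hδ h3
        have he2 : (β - δ) + (δ - γ) = β - γ := by abel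
        rw [← he2]
        exact add_mem hind hsub
  refine ⟨β, hβPos, ?_⟩
  intro α hα
  obtain ⟨hαroot, hαZ⟩ := Finset.mem_filter.mp hα
  rcases root_sign_split hb hCΔ hαroot hαZ with hp | hn
  · have hαPos : α ∈ Pos := (hmemPos α).mpr ⟨hαroot, hp⟩
    exact main (ht β) α hαPos (by omega)
  · have he : β - α = β + (-α) := by abel
    rw [he]
    exact add_mem hβcl hn

end RootSystemData

namespace RootSystemData

variable {k V : Type*} [Field k] [CharZero k] [AddCommGroup V] [Module k V]
variable {P : RootSystemData k V} {Δ : Finset V}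

lemma cascadeAux_subset : ∀ (n : ℕ) (T K : Finset V), K ∈ P.cascadeAux n T → K ⊆ T := by
  intro n
  induction n with
  | zero => intro T K h; simp [cascadeAux] at h
  | succ n ih =>
    intro T K h
    simp only [cascadeAux] at h
    obtain ⟨C, hC, hK⟩ := Finset.mem_biUnion.mp h
    rcases Finset.mem_insert.mp hK with rfl | hK'
    · exact components_subset hC
    · exact fun a ha =>
        components_subset hC (Finset.filter_subset _ _ (ih _ _ hK' ha))

lemma cascadeAux_comp : ∀ (n : ℕ) (T K : Finset V), T ⊆ Δ → K ∈ P.cascadeAux n T →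
    ∃ U x, U ⊆ Δ ∧ x ∈ U ∧ K = P.component U x := by
  intro n
  induction n with
  | zero => intro T K _ h; simp [cascadeAux] at h
  | succ n ih =>
    intro T K hT h
    simp only [cascadeAux] at h
    obtain ⟨C, hCmem, hKC⟩ := Finset.mem_biUnion.mp h
    rcases Finset.mem_insert.mp hKC with rfl | hKz
    · obtain ⟨x, hx, hxeq⟩ := Finset.mem_image.mp hCmem
      exact ⟨T, x, hT, hx, hxeq.symm⟩
    · refine ih (P.zeroPart C) K ?_ hKz
      exact fun a ha => hT (components_subset hCmem (Finset.filter_subset _ _ ha))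

lemma highestRoot_spec {K : Finset V} (h : ∃ ε, P.IsHighestRoot K ε) :
    P.IsHighestRoot K (P.highestRoot K) := by
  rw [highestRoot, dif_pos h]
  exact h.choose_spec

lemma highest_of_cascadeAux (hb : P.IsBase Δ) {n : ℕ} {T K : Finset V} (hT : T ⊆ Δ)
    (hK : K ∈ P.cascadeAux n T) : P.IsHighestRoot K (P.highestRoot K) := by
  obtain ⟨U, x, hUΔ, hxU, rfl⟩ := cascadeAux_comp n T K hT hK
  exact highestRoot_spec (exists_highestRoot hb hUΔ hxU)

lemma nested (hb : P.IsBase Δ) {C K' : Finset V} (hCΔ : C ⊆ Δ)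
    (hCh : P.IsHighestRoot C (P.highestRoot C))
    (hK'sub : K' ⊆ P.zeroPart C)
    (hK'h : P.IsHighestRoot K' (P.highestRoot K')) :
    P.highestRoot C + P.highestRoot K' ∉ P.roots ∧
    P.highestRoot C - P.highestRoot K' ∉ P.roots := by
  classical
  set ε := P.highestRoot C with hεdef
  set ε' := P.highestRoot K' with hε'def
  obtain ⟨hεPos, hεhigh⟩ := hCh
  obtain ⟨hε'Pos, _⟩ := hK'h
  obtain ⟨hεroot, hεcl⟩ := Finset.mem_filter.mp hεPos
  obtain ⟨hε'root, hε'cl⟩ := Finset.mem_filter.mp hε'Pos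
  have hK'C : K' ⊆ C := fun a ha => Finset.filter_subset _ _ (hK'sub ha)
  have hK'Δ : K' ⊆ Δ := fun a ha => hCΔ (hK'C ha)
  have hε'clC : ε' ∈ AddSubmonoid.closure (C : Set V) :=
    AddSubmonoid.closure_mono (Finset.coe_subset.mpr hK'C) hε'cl
  have hplus : ε + ε' ∉ P.roots := by
    intro hmem
    have hZ : ε + ε' ∈ AddSubgroup.closure (C : Set V) := add_mem (clNZ hεcl) (clNZ hε'clC)
    have hro : ε + ε' ∈ P.rootsOf C := Finset.mem_filter.mpr ⟨hmem, hZ⟩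
    have hcl2 := hεhigh _ hro
    have heq : ε - (ε + ε') = -ε' := by abel
    rw [heq] at hcl2
    obtain ⟨c1, hs1, hr1⟩ := repr_of_memN hCΔ hcl2
    obtain ⟨c2, hs2, hr2⟩ := repr_of_memN hCΔ hε'clC
    have hz : ∑ a ∈ Δ, ((c1 a + c2 a : ℤ)) • a = 0 := by
      have h1 : ∑ a ∈ Δ, ((c1 a + c2 a : ℤ)) • a = ∑ a ∈ Δ, (c1 a • a + c2 a • a) := by
        refine Finset.sum_congr rfl fun a _ => ?_
        push_cast
        rw [add_zsmul, natCast_zsmul, natCast_zsmul]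
      rw [h1, Finset.sum_add_distrib, ← hr1, ← hr2]
      abel
    have hc2z : ∀ a ∈ Δ, c2 a = 0 := by
      intro a ha
      have := coeff_eq_zero hb hz a ha
      omega
    have : ε' = 0 := by
      rw [hr2]
      exact Finset.sum_eq_zero fun a ha => by rw [hc2z a ha, zero_smul]
    exact P.ne_zero ε' hε'root this
  refine ⟨hplus, ?_⟩
  intro hmem
  obtain ⟨c2, hs2, hr2⟩ := repr_of_memN hK'Δ hε'cl
  have hr2Z : ε' = ∑ a ∈ Δ, ((c2 a : ℤ)) • a := by
    rw [hr2]; exact Finset.sum_congr rfl fun a _ => (natCast_zsmul _ _).symm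
  have horth : P.pairInt ε' ε = 0 := by
    rw [pairInt_rep hb hε'root hεroot hr2Z]
    refine Finset.sum_eq_zero fun a ha => ?_
    by_cases hc : c2 a = 0
    · simp [hc]
    · have haK' : a ∈ K' := by
        by_contra h
        exact hc (hs2 a h)
      have haz := hK'sub haK'
      have h0 : P.pairInt a (P.highestRoot C) = 0 := (Finset.mem_filter.mp haz).2
      rw [← hεdef] at h0
      rw [h0, mul_zero]
  have hpd : P.pairInt (ε - ε') ε = 2 := by
    have hcast : ((P.pairInt (ε - ε') ε : ℤ) : k) = ((2:ℤ):k) := by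
      rw [pairInt_cast hεroot hmem, map_sub, ← pairInt_cast hεroot hεroot,
        ← pairInt_cast hεroot hε'root, P.pair_self ε hεroot, horth]
      push_cast
      ring
    exact_mod_cast hcast
  have hrefl := P.reflect_mem ε hεroot _ hmem
  rw [hpd] at hrefl
  have heq : ε - ε' - (2:ℤ) • ε = -(ε + ε') := by
    rw [two_zsmul]; abel
  rw [heq] at hrefl
  exact hplus (by simpa using neg_mem hrefl)

lemma sibling (hb : P.IsBase Δ) {T C C' K K' : Finset V} (hT : T ⊆ Δ)
    (hC : C ∈ P.components T) (hC' : C' ∈ P.components T) (hne : C ≠ C')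
    (hKC : K ⊆ C) (hK'C' : K' ⊆ C')
    (hKh : P.IsHighestRoot K (P.highestRoot K))
    (hK'h : P.IsHighestRoot K' (P.highestRoot K')) :
    P.highestRoot K + P.highestRoot K' ∉ P.roots ∧
    P.highestRoot K - P.highestRoot K' ∉ P.roots := by
  classical
  obtain ⟨horthC, hdisj⟩ := components_orth (fun a ha => hb.subset (hT ha)) hC hC' hne
  set ε := P.highestRoot K with hεdef
  set ε' := P.highestRoot K' with hε'def
  obtain ⟨hεPos, _⟩ := hKh
  obtain ⟨hε'Pos, _⟩ := hK'h
  obtain ⟨hεroot, hεcl⟩ := Finset.mem_filter.mp hεPos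
  obtain ⟨hε'root, hε'cl⟩ := Finset.mem_filter.mp hε'Pos
  have hKΔ : K ⊆ Δ := fun a ha => hT (components_subset hC (hKC ha))
  have hK'Δ : K' ⊆ Δ := fun a ha => hT (components_subset hC' (hK'C' ha))
  obtain ⟨m, hms, hmr⟩ := repr_of_memN hKΔ hεcl
  obtain ⟨m', hms', hmr'⟩ := repr_of_memN hK'Δ hε'cl
  -- existence of positive coefficients
  have hma : ∃ a ∈ Δ, m a ≠ 0 := by
    by_contra h
    push_neg at h
    exact P.ne_zero ε hεroot (hmr.trans (Finset.sum_eq_zero fun a ha => by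
      rw [h a ha, zero_smul]))
  have hmb : ∃ b ∈ Δ, m' b ≠ 0 := by
    by_contra h
    push_neg at h
    exact P.ne_zero ε' hε'root (hmr'.trans (Finset.sum_eq_zero fun a ha => by
      rw [h a ha, zero_smul]))
  obtain ⟨a, haΔ, hmane⟩ := hma
  obtain ⟨b, hbΔ, hmbne⟩ := hmb
  have haK : a ∈ K := by
    by_contra h
    exact hmane (hms a h)
  have hbK' : b ∈ K' := by
    by_contra h
    exact hmbne (hms' b h)
  have hm'a : m' a = 0 := by
    by_contra h
    have haK' : a ∈ K' := by
      by_contra h2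
      exact h (hms' a h2)
    exact hdisj a ⟨hKC haK, hK'C' haK'⟩
  have hmb0 : m b = 0 := by
    by_contra h
    have hbK : b ∈ K := by
      by_contra h2
      exact h (hms b h2)
    exact hdisj b ⟨hKC hbK, hK'C' hbK'⟩
  set c : V → ℤ := fun v => (m v : ℤ) - (m' v : ℤ) with hcdef
  have hcrep : ε - ε' = ∑ v ∈ Δ, c v • v := by
    rw [hcdef]
    have h1 : ∀ v ∈ Δ, ((m v : ℤ) - (m' v : ℤ)) • v = m v • v - m' v • v := by
      intro v _
      rw [sub_zsmul, natCast_zsmul, natCast_zsmul, sub_eq_add_neg]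
    rw [Finset.sum_congr rfl h1, Finset.sum_sub_distrib, ← hmr, ← hmr']
  have hminus : ε - ε' ∉ P.roots := by
    intro hmem
    rcases hb.pos_or_neg _ hmem with hp | hn
    · obtain ⟨mm, hmm⟩ := mem_closureN_iff.mp hp
      have hmmz : ε - ε' = ∑ v ∈ Δ, ((mm v : ℤ)) • v := by
        rw [hmm]; exact Finset.sum_congr rfl fun v _ => (natCast_zsmul _ _).symm
      have := coeff_unique hb (hcrep.symm.trans hmmz) b hbΔ
      rw [hcdef] at this
      simp only at this
      omega
    · obtain ⟨mm, hmm⟩ := mem_closureN_iff.mp hn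
      have hmmz : -(ε - ε') = ∑ v ∈ Δ, ((mm v : ℤ)) • v := by
        rw [hmm]; exact Finset.sum_congr rfl fun v _ => (natCast_zsmul _ _).symm
      have hrep' : -(ε - ε') = ∑ v ∈ Δ, (-(c v)) • v := by
        rw [hcrep, ← Finset.sum_neg_distrib]
        exact Finset.sum_congr rfl fun v _ => (neg_zsmul _ _).symm
      have := coeff_unique hb (hrep'.symm.trans hmmz) a haΔ
      rw [hcdef] at this
      simp only at this
      omega
  -- orthogonality
  have hmrZ : ε = ∑ v ∈ Δ, ((m v : ℤ)) • v := by
    rw [hmr]; exact Finset.sum_congr rfl fun v _ => (natCast_zsmul _ _).symm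
  have hmrZ' : ε' = ∑ v ∈ Δ, ((m' v : ℤ)) • v := by
    rw [hmr']; exact Finset.sum_congr rfl fun v _ => (natCast_zsmul _ _).symm
  have hεa : ∀ v ∈ K', P.pairInt ε v = 0 := by
    intro v hvK'
    rw [pairInt_rep hb hεroot (hb.subset (hK'Δ hvK')) hmrZ]
    refine Finset.sum_eq_zero fun u hu => ?_
    by_cases hcu : m u = 0
    · simp [hcu]
    · have huK : u ∈ K := by
        by_contra h
        exact hcu (hms u h)
      rw [horthC u (hKC huK) v (hK'C' hvK'), mul_zero]
  have horth : P.pairInt ε' ε = 0 := by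
    rw [pairInt_rep hb hε'root hεroot hmrZ']
    refine Finset.sum_eq_zero fun v hv => ?_
    by_cases hcv : m' v = 0
    · simp [hcv]
    · have hvK' : v ∈ K' := by
        by_contra h
        exact hcv (hms' v h)
      rw [pairInt_zero_symm hεroot (hb.subset (hK'Δ hvK')) (hεa v hvK'), mul_zero]
  refine ⟨?_, hminus⟩
  intro hmem
  have hpd : P.pairInt (ε + ε') ε = 2 := by
    have hcast : ((P.pairInt (ε + ε') ε : ℤ) : k) = ((2:ℤ):k) := by
      rw [pairInt_cast hεroot hmem, map_add, ← pairInt_cast hεroot hεroot,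
        ← pairInt_cast hεroot hε'root, P.pair_self ε hεroot, horth]
      push_cast
      ring
    exact_mod_cast hcast
  have hrefl := P.reflect_mem ε hεroot _ hmem
  rw [hpd] at hrefl
  have heq : ε + ε' - (2:ℤ) • ε = -(ε - ε') := by
    rw [two_zsmul]; abel
  rw [heq] at hrefl
  exact hminus (by simpa using neg_mem hrefl)

lemma mainAux (hb : P.IsBase Δ) : ∀ (n : ℕ) (T : Finset V), T ⊆ Δ →
    ∀ K ∈ P.cascadeAux n T, ∀ K' ∈ P.cascadeAux n T, K ≠ K' →
    P.highestRoot K + P.highestRoot K' ∉ P.roots ∧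
    P.highestRoot K - P.highestRoot K' ∉ P.roots := by
  intro n
  induction n with
  | zero => intro T hT K hK; simp [cascadeAux] at hK
  | succ n ih =>
    intro T hT K hK K' hK' hne
    have hKhigh : P.IsHighestRoot K (P.highestRoot K) := highest_of_cascadeAux hb hT hK
    have hK'high : P.IsHighestRoot K' (P.highestRoot K') := highest_of_cascadeAux hb hT hK'
    simp only [cascadeAux] at hK hK'
    obtain ⟨C, hCmem, hKC⟩ := Finset.mem_biUnion.mp hK
    obtain ⟨C', hC'mem, hK'C'⟩ := Finset.mem_biUnion.mp hK'
    have hCΔ : C ⊆ Δ := fun a ha => hT (components_subset hCmem ha)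
    have hC'Δ : C' ⊆ Δ := fun a ha => hT (components_subset hC'mem ha)
    by_cases hCC' : C = C'
    · subst hCC'
      rcases Finset.mem_insert.mp hKC with rfl | hKz
      · rcases Finset.mem_insert.mp hK'C' with rfl | hK'z
        · exact absurd rfl hne
        · exact nested hb hCΔ hKhigh (cascadeAux_subset n _ _ hK'z) hK'high
      · rcases Finset.mem_insert.mp hK'C' with rfl | hK'z
        · obtain ⟨h1, h2⟩ := nested hb hCΔ hK'high (cascadeAux_subset n _ _ hKz) hKhigh
          constructor
          · intro hmem
            exact h1 (by rwa [add_comm])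
          · intro hmem
            apply h2
            have := neg_mem hmem
            rwa [neg_sub] at this
        · refine ih (P.zeroPart C) (fun a ha => hCΔ (Finset.filter_subset _ _ ha))
            K hKz K' hK'z hne
    · have hKsub : K ⊆ C := by
        rcases Finset.mem_insert.mp hKC with rfl | h
        · exact subset_rfl
        · exact (cascadeAux_subset n _ _ h).trans (Finset.filter_subset _ _)
      have hK'sub : K' ⊆ C' := by
        rcases Finset.mem_insert.mp hK'C' with rfl | h
        · exact subset_rfl
        · exact (cascadeAux_subset n _ _ h).trans (Finset.filter_subset _ _)
      exact sibling hb hT hCmem hC'mem hCC' hKsub hK'sub hKhigh hK'high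

end RootSystemData


variable {k V : Type*} [Field k] [CharZero k] [AddCommGroup V] [Module k V]

/-- Let `R` be a reduced root system with base `Π` and let `S ⊆ Δ`.  If `K`
and `K'` are distinct elements of the cascade `𝒦(S)`, then `ε_K` and `ε_{K'}` are strongly
orthogonal: neither `ε_K + ε_{K'}` nor `ε_K - ε_{K'}` is a root of `R`. -/
theorem cascade_highest_roots_strongly_orthogonal
    (P : RootSystemData k V) (Δ : Finset V) (hbase : P.IsBase Δ)
    (S : Finset V) (hS : S ⊆ Δ)
    (K : Finset V) (hK : K ∈ P.cascade S) (K' : Finset V) (hK' : K' ∈ P.cascade S)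
    (hne : K ≠ K') :
    P.highestRoot K + P.highestRoot K' ∉ P.roots ∧
    P.highestRoot K - P.highestRoot K' ∉ P.roots := by
  have hK2 : K ∈ P.cascadeAux (S.card + 1) S := hK
  have hK'2 : K' ∈ P.cascadeAux (S.card + 1) S := hK'
  exact RootSystemData.mainAux hbase (S.card + 1) S hS K hK2 K' hK'2 hne
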